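/- Let U, U* ∈ ℝ^{n×r} have orthonormal columns. Then the squared chordal Frobenius distance and squared projection distance satisfy: d_f²(U, U*) ≤ (1/2)‖UU^⊤ − U*U*^⊤‖_F² + (1/4)‖UU^⊤ − U*U*^⊤‖_F⁴, where d_f(U,U*) = min_{O∈O(r)} ‖U − U*O‖_F. -/

import Mathlib

open Matrix

/-- Frobenius norm of a matrix. -/
noncomputable def frob {m n : ℕ} (A : Matrix (Fin m) (Fin n) ℝ) : ℝ :=
  Real.sqrt (∑ i, ∑ j, A i j ^ 2)

/-- Chordal Frobenius distance `d_f(U, U*) = min_{O ∈ O(r)} ‖U − U*O‖_F`. -/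
noncomputable def dfDist {n r : ℕ} (U Ustar : Matrix (Fin n) (Fin r) ℝ) : ℝ :=
  sInf { t | ∃ O : Matrix (Fin r) (Fin r) ℝ, Oᵀ * O = 1 ∧ t = frob (U - Ustar * O) }

section Aux


lemma dot_mulVec_self' {r : ℕ} (A : Matrix (Fin r) (Fin r) ℝ) (x : Fin r → ℝ) :
    (A *ᵥ x) ⬝ᵥ (A *ᵥ x) = x ⬝ᵥ ((Aᵀ * A) *ᵥ x) := by
  rw [← Matrix.mulVec_mulVec, Matrix.mulVec_transpose, Matrix.dotProduct_mulVec,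
    dotProduct_comm]

lemma exists_polar' {r : ℕ} (M S : Matrix (Fin r) (Fin r) ℝ) (hSymm : Sᵀ = S)
    (hSS : S * S = Mᵀ * M) : ∃ W : Matrix (Fin r) (Fin r) ℝ, Wᵀ * W = 1 ∧ M = W * S := by
  set V := EuclideanSpace ℝ (Fin r)
  let f : V →ₗ[ℝ] V := Matrix.toEuclideanLin S
  let g : V →ₗ[ℝ] V := Matrix.toEuclideanLin M
  have hf : ∀ x : V, (f x : Fin r → ℝ) = S *ᵥ (x : Fin r → ℝ) := fun x => rfl
  have hg : ∀ x : V, (g x : Fin r → ℝ) = M *ᵥ (x : Fin r → ℝ) := fun x => rfl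
  have hinner : ∀ u v : V, (inner ℝ u v : ℝ) = ∑ i, u i * v i := by
    intro u v
    rw [PiLp.inner_apply]
    simp [mul_comm]
  have key : ∀ x : V, ‖f x‖ = ‖g x‖ := by
    intro x
    have h1 : ‖f x‖ ^ 2 = ‖g x‖ ^ 2 := by
      rw [← real_inner_self_eq_norm_sq, ← real_inner_self_eq_norm_sq, hinner, hinner]
      have e1 : ∑ i, f x i * f x i = (S *ᵥ x) ⬝ᵥ (S *ᵥ x) := by
        simp [hf, dotProduct]
      have e2 : ∑ i, g x i * g x i = (M *ᵥ x) ⬝ᵥ (M *ᵥ x) := by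
        simp [hg, dotProduct]
      rw [e1, e2, dot_mulVec_self', dot_mulVec_self', hSymm, hSS]
    rw [← Real.sqrt_sq (norm_nonneg (f x)), ← Real.sqrt_sq (norm_nonneg (g x)), h1]
  have hker : LinearMap.ker f ≤ LinearMap.ker g := by
    intro x hx
    rw [LinearMap.mem_ker] at hx ⊢
    have := key x
    rw [hx, norm_zero] at this
    exact (norm_eq_zero.mp this.symm)
  let e := f.quotKerEquivRange
  let g' := (LinearMap.ker f).liftQ g hker
  let φ : LinearMap.range f →ₗ[ℝ] V := g'.comp e.symm.toLinearMap
  have hφ : ∀ x : V, φ ⟨f x, LinearMap.mem_range_self f x⟩ = g x := by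
    intro x
    have he : e (Submodule.Quotient.mk x) = ⟨f x, LinearMap.mem_range_self f x⟩ :=
      Subtype.ext (f.quotKerEquivRange_apply_mk x)
    have h2 : e.symm ⟨f x, LinearMap.mem_range_self f x⟩ = Submodule.Quotient.mk x := by
      rw [← he, LinearEquiv.symm_apply_apply]
    simp only [φ, LinearMap.comp_apply, LinearEquiv.coe_toLinearMap, h2]
    exact Submodule.liftQ_apply _ g x
  have hnorm : ∀ k : LinearMap.range f, ‖φ k‖ = ‖k‖ := by
    rintro ⟨k, x, hx⟩
    subst hx
    rw [hφ x]
    exact (key x).symm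
  let L : LinearMap.range f →ₗᵢ[ℝ] V := ⟨φ, hnorm⟩
  let Wl := L.extend
  have hWl : ∀ x : V, Wl (f x) = g x := by
    intro x
    have h3 := L.extend_apply ⟨f x, LinearMap.mem_range_self f x⟩
    exact h3.trans (hφ x)
  let W : Matrix (Fin r) (Fin r) ℝ := Matrix.toEuclideanLin.symm Wl.toLinearMap
  have hWeq : Matrix.toEuclideanLin W = Wl.toLinearMap :=
    Matrix.toEuclideanLin.apply_symm_apply _
  have hWapp : ∀ x : V, (Wl x : Fin r → ℝ) = W *ᵥ (x : Fin r → ℝ) := by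
    intro x
    have h4 : Wl x = Matrix.toEuclideanLin W x := by rw [hWeq]; rfl
    rw [h4]; rfl
  refine ⟨W, ?_, ?_⟩
  · ext i j
    have h := Wl.inner_map_map (EuclideanSpace.single i 1) (EuclideanSpace.single j 1)
    rw [hinner, hinner] at h
    have hs : ∀ (a : Fin r) (k : Fin r),
        (EuclideanSpace.single a (1:ℝ)) k = if k = a then 1 else 0 := by
      intro a k; simp [EuclideanSpace.single_apply]
    have hsingle : ∀ a : Fin r,
        ((EuclideanSpace.single a (1:ℝ)) : Fin r → ℝ) = Pi.single a 1 := by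
      intro a; funext k; rw [hs]; simp [Pi.single_apply]
    have hl : ∀ a k, (Wl (EuclideanSpace.single a (1:ℝ))) k = W k a := by
      intro a k
      rw [hWapp, hsingle, Matrix.mulVec_single]
      simp
    simp only [hl, hs] at h
    rw [Matrix.mul_apply, Matrix.one_apply]
    simp only [Matrix.transpose_apply]
    rw [h]
    by_cases hij : i = j
    · subst hij; simp
    · have : ∀ x : Fin r, (if x = i then (1:ℝ) else 0) * (if x = j then 1 else 0) = 0 := by
        intro x
        by_cases h1 : x = i <;> by_cases h2 : x = j <;> simp_all
      rw [Finset.sum_congr rfl fun x _ => this x]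
      simp [hij]
  · have hall : ∀ x : V, M *ᵥ (x : Fin r → ℝ) = (W * S) *ᵥ (x : Fin r → ℝ) := by
      intro x
      rw [← Matrix.mulVec_mulVec, ← hf x, ← hWapp, hWl, hg]
    ext i j
    have h5 := congrFun (hall ((WithLp.equiv 2 (Fin r → ℝ)).symm (Pi.single j 1))) i
    rw [show ((WithLp.equiv 2 (Fin r → ℝ)).symm (Pi.single j 1) : Fin r → ℝ)
      = Pi.single j 1 from rfl] at h5
    simpa [Matrix.mulVec_single] using h5

lemma trace_eq_sum_eigen' {r : ℕ} {S : Matrix (Fin r) (Fin r) ℝ} (hS : S.IsHermitian) :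
    S.trace = ∑ i, hS.eigenvalues i ∧ (S * S).trace = ∑ i, hS.eigenvalues i ^ 2 := by
  have hQ : (star (hS.eigenvectorUnitary : Matrix (Fin r) (Fin r) ℝ)) *
      (hS.eigenvectorUnitary : Matrix (Fin r) (Fin r) ℝ) = 1 :=
    hS.eigenvectorUnitary.2.1
  set Q : Matrix (Fin r) (Fin r) ℝ := (hS.eigenvectorUnitary : Matrix (Fin r) (Fin r) ℝ) with hQdef
  set D : Matrix (Fin r) (Fin r) ℝ := Matrix.diagonal (RCLike.ofReal ∘ hS.eigenvalues) with hD
  have hspec : S = Q * D * star Q := hS.spectral_theorem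
  have htr : ∀ X : Matrix (Fin r) (Fin r) ℝ, (Q * X * star Q).trace = X.trace := by
    intro X
    rw [Matrix.trace_mul_comm, ← Matrix.mul_assoc, hQ, Matrix.one_mul]
  constructor
  · conv_lhs => rw [hspec]
    rw [htr, hD]
    simp [Matrix.trace_diagonal]
  · have : S * S = Q * (D * D) * star Q := by
      conv_lhs => rw [hspec]
      simp only [Matrix.mul_assoc]
      rw [← Matrix.mul_assoc (star Q) Q (D * star Q), hQ, Matrix.one_mul]
    rw [this, htr, hD]
    simp [Matrix.diagonal_mul_diagonal, Matrix.trace_diagonal, sq]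

lemma eigen_le_one' {r : ℕ} {S : Matrix (Fin r) (Fin r) ℝ} (hS : S.PosSemidef)
    (hsub : (1 - S * S).PosSemidef) (i : Fin r) : hS.1.eigenvalues i ≤ 1 := by
  set μ := hS.1.eigenvalues i with hμ
  set v : Fin r → ℝ := (WithLp.equiv 2 (Fin r → ℝ)) (hS.1.eigenvectorBasis i) with hv
  have hvec : S *ᵥ v = μ • v := hS.1.mulVec_eigenvectorBasis i
  have hvec2 : (S * S) *ᵥ v = (μ ^ 2) • v := by
    rw [← Matrix.mulVec_mulVec, hvec, Matrix.mulVec_smul, hvec, smul_smul, sq]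
  have hnv : v ⬝ᵥ v = 1 := by
    have h1 : ‖hS.1.eigenvectorBasis i‖ = 1 := (hS.1.eigenvectorBasis).orthonormal.1 i
    have h2 : (inner ℝ (hS.1.eigenvectorBasis i) (hS.1.eigenvectorBasis i) : ℝ) = 1 := by
      rw [real_inner_self_eq_norm_sq, h1]; norm_num
    rw [PiLp.inner_apply] at h2
    simpa [dotProduct, mul_comm, hv, sq] using h2
  have hpos := hsub.dotProduct_mulVec_nonneg v
  have hμ0 := hS.eigenvalues_nonneg i
  rw [Matrix.sub_mulVec, Matrix.one_mulVec, hvec2] at hpos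
  have hstar : star v = v := by funext k; simp
  rw [hstar, dotProduct_sub, dotProduct_smul, hnv] at hpos
  simp only [smul_eq_mul, mul_one] at hpos
  nlinarith

lemma conjT_eq_T {m n : ℕ} (A : Matrix (Fin m) (Fin n) ℝ) : Aᴴ = Aᵀ :=
  Matrix.ext fun i j => by simp [Matrix.conjTranspose_apply]

lemma scalar_core' {r : ℕ} (μ : Fin r → ℝ) (h0 : ∀ i, 0 ≤ μ i) (h1 : ∀ i, μ i ≤ 1) :
    (r : ℝ) + r - 2 * ∑ i, μ i ≤
      (1/2) * ((r:ℝ) + r - 2 * ∑ i, μ i ^ 2) +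
        (1/4) * ((r:ℝ) + r - 2 * ∑ i, μ i ^ 2) ^ 2 := by
  have hr : ((r:ℝ) + r - 2 * ∑ i, μ i ^ 2) = 2 * ∑ i, (1 - μ i ^ 2) := by
    rw [Finset.sum_sub_distrib]
    simp [Finset.card_univ]
    ring
  have hl : ((r:ℝ) + r - 2 * ∑ i, μ i) = ∑ i, 2 * (1 - μ i) := by
    rw [show ∀ (s : Finset (Fin r)), ∑ i ∈ s, 2 * (1 - μ i) = ∑ i ∈ s, (2 - 2 * μ i) from
      fun s => Finset.sum_congr rfl fun i _ => by ring]
    rw [Finset.sum_sub_distrib]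
    simp [Finset.card_univ, Finset.mul_sum]
    ring
  rw [hr, hl]
  have key : ∑ i, 2 * (1 - μ i) ≤ ∑ i, ((1 - μ i ^ 2) + (1 - μ i ^ 2) ^ 2) :=
    Finset.sum_le_sum fun i _ => by
      nlinarith [mul_nonneg (mul_nonneg (h0 i) (sq_nonneg (1 - μ i)))
        (by linarith [h0 i] : (0:ℝ) ≤ μ i + 2)]
  have k2 : ∑ i, ((1 - μ i ^ 2) + (1 - μ i ^ 2) ^ 2)
      = ∑ i, (1 - μ i ^ 2) + ∑ i, (1 - μ i ^ 2) ^ 2 := Finset.sum_add_distrib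
  have k3 : ∑ i, (1 - μ i ^ 2) ^ 2 ≤ (∑ i, (1 - μ i ^ 2)) ^ 2 :=
    Finset.sum_sq_le_sq_sum_of_nonneg fun i _ => by nlinarith [h0 i, h1 i]
  nlinarith [key]

lemma frob_nonneg' {m n : ℕ} (A : Matrix (Fin m) (Fin n) ℝ) : 0 ≤ frob A :=
  Real.sqrt_nonneg _

lemma frob_sq' {m n : ℕ} (A : Matrix (Fin m) (Fin n) ℝ) : frob A ^ 2 = (Aᵀ * A).trace := by
  rw [frob, Real.sq_sqrt (by positivity)]
  rw [Matrix.trace]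
  simp only [Matrix.diag_apply, Matrix.mul_apply, Matrix.transpose_apply, sq]
  exact Finset.sum_comm

end Aux

/-- `d_f²(U,U*) ≤ ½‖UUᵀ − U*U*ᵀ‖_F² + ¼‖UUᵀ − U*U*ᵀ‖_F⁴`. -/
theorem stmt10 {n r : ℕ} (U Ustar : Matrix (Fin n) (Fin r) ℝ)
    (hU : Uᵀ * U = 1) (hUs : Ustarᵀ * Ustar = 1) :
    dfDist U Ustar ^ 2 ≤
      (1 / 2) * frob (U * Uᵀ - Ustar * Ustarᵀ) ^ 2 +
        (1 / 4) * frob (U * Uᵀ - Ustar * Ustarᵀ) ^ 4 := by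
  classical
  set M : Matrix (Fin r) (Fin r) ℝ := Uᵀ * Ustar with hMdef
  have hMT : Mᵀ = Ustarᵀ * U := by
    rw [hMdef, Matrix.transpose_mul, Matrix.transpose_transpose]
  have hPSD : (Mᵀ * M).PosSemidef := by
    have := Matrix.posSemidef_conjTranspose_mul_self M
    rwa [conjT_eq_T] at this
  set S : Matrix (Fin r) (Fin r) ℝ := (open scoped MatrixOrder in CFC.sqrt (Mᵀ * M)) with hSdef
  have hSpsd : S.PosSemidef := by open scoped MatrixOrder in exact (CFC.sqrt_nonneg _).posSemidef
  have hSh : S.IsHermitian := hSpsd.1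
  have hSymm : Sᵀ = S := by
    have := hSh
    rw [Matrix.IsHermitian, conjT_eq_T] at this
    exact this
  have hSS : S * S = Mᵀ * M := by open scoped MatrixOrder in exact CFC.sqrt_mul_sqrt_self _ hPSD.nonneg
  obtain ⟨W, hW, hMW⟩ := exists_polar' M S hSymm hSS
  set O : Matrix (Fin r) (Fin r) ℝ := Wᵀ with hOdef
  have hO : Oᵀ * O = 1 := by
    rw [hOdef, Matrix.transpose_transpose]
    exact mul_eq_one_comm.mp hW
  -- trace of M*O equals trace of S
  have hMO : (M * O).trace = S.trace := by
    rw [hMW, hOdef, Matrix.trace_mul_comm, ← Matrix.mul_assoc, hW, Matrix.one_mul]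
  -- 1 - S*S is PSD
  have hidem : (U * Uᵀ) * (U * Uᵀ) = U * Uᵀ := by
    rw [Matrix.mul_assoc, ← Matrix.mul_assoc Uᵀ U Uᵀ, hU, Matrix.one_mul]
  have hsub : (1 - S * S).PosSemidef := by
    rw [hSS]
    have h1 : 1 - Mᵀ * M = Ustarᵀ * (1 - U * Uᵀ) * Ustar := by
      rw [Matrix.mul_sub, Matrix.sub_mul, Matrix.mul_one, hUs, hMT, hMdef]
      congr 1
      simp only [Matrix.mul_assoc]
    have h2 : (1 - U * Uᵀ).PosSemidef := by
      have hsym : (1 - U * Uᵀ)ᵀ = 1 - U * Uᵀ := by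
        rw [Matrix.transpose_sub, Matrix.transpose_one, Matrix.transpose_mul,
          Matrix.transpose_transpose]
      have hid2 : (1 - U * Uᵀ) * (1 - U * Uᵀ) = 1 - U * Uᵀ := by
        rw [Matrix.sub_mul, Matrix.mul_sub, Matrix.mul_sub, Matrix.one_mul, Matrix.mul_one,
          hidem]
        simp only [Matrix.one_mul, Matrix.mul_one]
        abel
      have := Matrix.posSemidef_conjTranspose_mul_self (1 - U * Uᵀ)
      rwa [conjT_eq_T, hsym, hid2] at this
    have h3 := h2.conjTranspose_mul_mul_same Ustar
    rw [conjT_eq_T] at h3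
    rwa [h1]
  -- eigenvalues
  set μ : Fin r → ℝ := hSh.eigenvalues with hμdef
  have hμ0 : ∀ i, 0 ≤ μ i := fun i => hSpsd.eigenvalues_nonneg i
  have hμ1 : ∀ i, μ i ≤ 1 := fun i => eigen_le_one' hSpsd hsub i
  obtain ⟨htr1, htr2⟩ := trace_eq_sum_eigen' hSh
  have htrMM : (Mᵀ * M).trace = ∑ i, μ i ^ 2 := by rw [← hSS]; exact htr2
  -- computation A
  have hcardtr : ((1 : Matrix (Fin r) (Fin r) ℝ)).trace = (r : ℝ) := by
    rw [Matrix.trace_one]; simp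
  have hA : frob (U - Ustar * O) ^ 2 = (r : ℝ) + r - 2 * S.trace := by
    rw [frob_sq']
    have expand : (U - Ustar * O)ᵀ * (U - Ustar * O)
        = Uᵀ * U - Uᵀ * (Ustar * O) - (Ustar * O)ᵀ * U + (Ustar * O)ᵀ * (Ustar * O) := by
      rw [Matrix.transpose_sub, Matrix.sub_mul, Matrix.mul_sub, Matrix.mul_sub]
      abel
    have e1 : (Uᵀ * U).trace = (r : ℝ) := by rw [hU, hcardtr]
    have e2 : (Uᵀ * (Ustar * O)).trace = S.trace := by
      rw [← Matrix.mul_assoc, ← hMdef, hMO]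
    have e3 : ((Ustar * O)ᵀ * U).trace = S.trace := by
      rw [← Matrix.trace_transpose, Matrix.transpose_mul, Matrix.transpose_transpose, e2]
    have e4 : ((Ustar * O)ᵀ * (Ustar * O)).trace = (r : ℝ) := by
      rw [Matrix.transpose_mul, Matrix.mul_assoc, ← Matrix.mul_assoc Ustarᵀ Ustar O, hUs,
        Matrix.one_mul, hO, hcardtr]
    rw [expand, Matrix.trace_add, Matrix.trace_sub, Matrix.trace_sub, e1, e2, e3, e4]
    ring
  -- computation B
  have hB : frob (U * Uᵀ - Ustar * Ustarᵀ) ^ 2 = (r : ℝ) + r - 2 * (Mᵀ * M).trace := by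
    rw [frob_sq']
    have hsymB : (U * Uᵀ - Ustar * Ustarᵀ)ᵀ = U * Uᵀ - Ustar * Ustarᵀ := by
      rw [Matrix.transpose_sub, Matrix.transpose_mul, Matrix.transpose_mul,
        Matrix.transpose_transpose, Matrix.transpose_transpose]
    rw [hsymB]
    have expandB : (U * Uᵀ - Ustar * Ustarᵀ) * (U * Uᵀ - Ustar * Ustarᵀ)
        = (U * Uᵀ) * (U * Uᵀ) - (U * Uᵀ) * (Ustar * Ustarᵀ)
          - (Ustar * Ustarᵀ) * (U * Uᵀ) + (Ustar * Ustarᵀ) * (Ustar * Ustarᵀ) := by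
      rw [Matrix.sub_mul, Matrix.mul_sub, Matrix.mul_sub]
      abel
    have hidem2 : (Ustar * Ustarᵀ) * (Ustar * Ustarᵀ) = Ustar * Ustarᵀ := by
      rw [Matrix.mul_assoc, ← Matrix.mul_assoc Ustarᵀ Ustar Ustarᵀ, hUs, Matrix.one_mul]
    have f1 : ((U * Uᵀ) * (U * Uᵀ)).trace = (r : ℝ) := by
      rw [hidem, Matrix.trace_mul_comm, hU, hcardtr]
    have f4 : ((Ustar * Ustarᵀ) * (Ustar * Ustarᵀ)).trace = (r : ℝ) := by
      rw [hidem2, Matrix.trace_mul_comm, hUs, hcardtr]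
    have f2 : ((U * Uᵀ) * (Ustar * Ustarᵀ)).trace = (Mᵀ * M).trace := by
      rw [Matrix.mul_assoc, Matrix.trace_mul_comm U (Uᵀ * (Ustar * Ustarᵀ))]
      rw [show Uᵀ * (Ustar * Ustarᵀ) * U = (Uᵀ * Ustar) * (Ustarᵀ * U) by
        simp only [Matrix.mul_assoc]]
      rw [← hMdef, ← hMT, Matrix.trace_mul_comm]
    have f3 : ((Ustar * Ustarᵀ) * (U * Uᵀ)).trace = (Mᵀ * M).trace := by
      rw [Matrix.trace_mul_comm, f2]
    rw [expandB, Matrix.trace_add, Matrix.trace_sub, Matrix.trace_sub, f1, f2, f3, f4]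
    ring
  -- dfDist bounds
  have hmem : frob (U - Ustar * O) ∈
      { t | ∃ O' : Matrix (Fin r) (Fin r) ℝ, O'ᵀ * O' = 1 ∧ t = frob (U - Ustar * O') } :=
    ⟨O, hO, rfl⟩
  have hbdd : BddBelow { t | ∃ O' : Matrix (Fin r) (Fin r) ℝ,
      O'ᵀ * O' = 1 ∧ t = frob (U - Ustar * O') } := by
    refine ⟨0, ?_⟩
    rintro x ⟨O', _, rfl⟩
    exact frob_nonneg' _
  have hle : dfDist U Ustar ≤ frob (U - Ustar * O) := csInf_le hbdd hmem
  have h0 : 0 ≤ dfDist U Ustar := by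
    apply le_csInf ⟨_, hmem⟩
    rintro x ⟨O', _, rfl⟩
    exact frob_nonneg' _
  have hsq : dfDist U Ustar ^ 2 ≤ frob (U - Ustar * O) ^ 2 := pow_le_pow_left₀ h0 hle 2
  have hfour : frob (U * Uᵀ - Ustar * Ustarᵀ) ^ 4
      = (frob (U * Uᵀ - Ustar * Ustarᵀ) ^ 2) ^ 2 := by ring
  calc dfDist U Ustar ^ 2 ≤ frob (U - Ustar * O) ^ 2 := hsq
    _ = (r : ℝ) + r - 2 * ∑ i, μ i := by rw [hA, htr1]
    _ ≤ (1/2) * ((r:ℝ) + r - 2 * ∑ i, μ i ^ 2)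
        + (1/4) * ((r:ℝ) + r - 2 * ∑ i, μ i ^ 2) ^ 2 := scalar_core' μ hμ0 hμ1
    _ = (1 / 2) * frob (U * Uᵀ - Ustar * Ustarᵀ) ^ 2 +
        (1 / 4) * frob (U * Uᵀ - Ustar * Ustarᵀ) ^ 4 := by
      rw [hfour, hB, htrMM]
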